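/- Let f : ℝ → ℝ be bounded, continuous, piecewise continuously differentiable with finitely many non-differentiable points, and with bounded derivative. Then ∫ z·f(z) dγ(z) = ∫ f'(z) dγ(z), where γ is the standard Gaussian measure. -/

import Mathlib

open MeasureTheory ProbabilityTheory Real Set Filter Topology
open scoped ENNReal NNReal

/-- FTC-2 allowing a finite set of non-differentiability points. -/
lemma ftc_finset_aux (s : Finset ℝ) : ∀ (g g' : ℝ → ℝ) (a b : ℝ), a ≤ b →
    ContinuousOn g (Set.Icc a b) →
    (∀ x ∈ Set.Ioo a b, x ∉ s → HasDerivAt g (g' x) x) →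
    IntervalIntegrable g' volume a b →
    ∫ y in a..b, g' y = g b - g a := by
  classical
  induction s using Finset.induction_on with
  | empty =>
    intro g g' a b hab hcont hderiv hint
    exact intervalIntegral.integral_eq_sub_of_hasDeriv_right_of_le hab hcont
      (fun x hx => ((hderiv x hx (by simp)).hasDerivWithinAt)) hint
  | insert c s hc ih =>
    intro g g' a b hab hcont hderiv hint
    by_cases hcab : c ∈ Set.Ioo a b
    · have hac : a ≤ c := hcab.1.le
      have hcb : c ≤ b := hcab.2.le
      have hint1 : IntervalIntegrable g' volume a c := by
        refine hint.mono_set ?_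
        rw [Set.uIcc_of_le hac, Set.uIcc_of_le hab]
        exact Set.Icc_subset_Icc le_rfl hcb
      have hint2 : IntervalIntegrable g' volume c b := by
        refine hint.mono_set ?_
        rw [Set.uIcc_of_le hcb, Set.uIcc_of_le hab]
        exact Set.Icc_subset_Icc hac le_rfl
      have h1 : ∫ y in a..c, g' y = g c - g a := by
        refine ih g g' a c hac (hcont.mono (Set.Icc_subset_Icc le_rfl hcb)) ?_ hint1
        intro x hx hxs
        refine hderiv x ⟨hx.1, hx.2.trans hcab.2⟩ ?_
        simp only [Finset.mem_insert, not_or]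
        exact ⟨ne_of_lt hx.2, hxs⟩
      have h2 : ∫ y in c..b, g' y = g b - g c := by
        refine ih g g' c b hcb (hcont.mono (Set.Icc_subset_Icc hac le_rfl)) ?_ hint2
        intro x hx hxs
        refine hderiv x ⟨hcab.1.trans hx.1, hx.2⟩ ?_
        simp only [Finset.mem_insert, not_or]
        exact ⟨(ne_of_gt hx.1), hxs⟩
      rw [← intervalIntegral.integral_add_adjacent_intervals hint1 hint2, h1, h2]
      ring
    · refine ih g g' a b hab hcont ?_ hint
      intro x hx hxs
      refine hderiv x hx ?_
      simp only [Finset.mem_insert, not_or]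
      exact ⟨fun h => hcab (h ▸ hx), hxs⟩

set_option maxHeartbeats 2000000 in
theorem gaussian_integration_by_parts_continuous
    (f f' : ℝ → ℝ) (s : Finset ℝ) (C C' : ℝ)
    (hcont : Continuous f)
    (hbdd : ∀ z, |f z| ≤ C)
    (hderiv : ∀ z ∉ s, HasDerivAt f (f' z) z)
    (hmeas : Measurable f')
    (hderiv_bdd : ∀ z, |f' z| ≤ C') :
    ∫ z, z * f z ∂(gaussianReal 0 1) = ∫ z, f' z ∂(gaussianReal 0 1) := by
  classical
  set φ : ℝ → ℝ := gaussianPDFReal 0 1 with hφdef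
  -- basic facts about φ
  have hφ_eq : ∀ x, φ x = (Real.sqrt (2 * π))⁻¹ * Real.exp (-(x ^ 2) / 2) := by
    intro x
    simp [hφdef, gaussianPDFReal, mul_one, NNReal.coe_one]
  have hφpos : ∀ x, 0 < φ x := fun x => gaussianPDFReal_pos 0 1 x one_ne_zero
  have hφmeas : Measurable φ := measurable_gaussianPDFReal 0 1
  have hφderiv : ∀ x, HasDerivAt φ (-x * φ x) x := by
    intro x
    have h1 : HasDerivAt (fun y : ℝ => -(y ^ 2) / 2) (-x) x := by
      have := ((hasDerivAt_pow 2 x).neg).div_const 2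
      simpa using this.congr_deriv (by push_cast; ring)
    have h2 : HasDerivAt (fun y : ℝ => Real.exp (-(y ^ 2) / 2))
        (Real.exp (-(x ^ 2) / 2) * (-x)) x := (Real.hasDerivAt_exp _).comp x h1
    have h3 : HasDerivAt (fun y : ℝ => (Real.sqrt (2 * π))⁻¹ * Real.exp (-(y ^ 2) / 2))
        ((Real.sqrt (2 * π))⁻¹ * (Real.exp (-(x ^ 2) / 2) * (-x))) x := h2.const_mul _
    have : HasDerivAt φ ((Real.sqrt (2 * π))⁻¹ * (Real.exp (-(x ^ 2) / 2) * (-x))) x := by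
      refine HasDerivAt.congr_of_eventuallyEq h3 ?_
      filter_upwards [] with y using (hφ_eq y)
    convert this using 1
    rw [hφ_eq x]; ring
  have hφcont : Continuous φ := by
    have : ∀ x : ℝ, ContinuousAt φ x := fun x => (hφderiv x).continuousAt
    exact continuous_iff_continuousAt.2 this
  -- integrability facts
  have hφint : Integrable φ volume := integrable_gaussianPDFReal 0 1
  have habsint : Integrable (fun x => |x| * φ x) volume := by
    have h : Integrable (fun x => x * φ x) volume := by
      have h0 : Integrable (fun x : ℝ => x * Real.exp (-(1/2 : ℝ) * x ^ 2)) volume :=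
        integrable_mul_exp_neg_mul_sq (by norm_num)
      have := h0.const_mul (Real.sqrt (2 * π))⁻¹
      refine this.congr (Filter.Eventually.of_forall fun x => ?_)
      simp only [hφ_eq]
      rw [show -(1/2 : ℝ) * x ^ 2 = -(x ^ 2) / 2 by ring]
      ring
    have := h.abs
    refine this.congr (Filter.Eventually.of_forall fun x => ?_)
    simp only [abs_mul, abs_of_pos (hφpos x)]
  -- the function g and its derivative G'
  set g : ℝ → ℝ := fun z => f z * φ z with hgdef
  set G' : ℝ → ℝ := fun z => (f' z - z * f z) * φ z with hG'def
  have hgcont : Continuous g := hcont.mul hφcont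
  have hgderiv : ∀ x ∉ s, HasDerivAt g (G' x) x := by
    intro x hx
    have := (hderiv x hx).fun_mul (hφderiv x)
    refine this.congr_deriv ?_
    show _ = (f' x - x * f x) * φ x; ring
  have hC : 0 ≤ C := le_trans (abs_nonneg _) (hbdd 0)
  have hC' : 0 ≤ C' := le_trans (abs_nonneg _) (hderiv_bdd 0)
  -- G' is integrable on ℝ
  have hG'int : Integrable G' volume := by
    have hmeasG' : AEStronglyMeasurable G' volume := by
      refine Measurable.aestronglyMeasurable ?_
      exact ((hmeas.sub (measurable_id.mul hcont.measurable)).mul hφmeas)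
    refine Integrable.mono' ((hφint.const_mul C').add (habsint.const_mul C)) hmeasG'
      (Filter.Eventually.of_forall fun x => ?_)
    have h1 : |G' x| = |f' x - x * f x| * φ x := by
      rw [hG'def, abs_mul, abs_of_pos (hφpos x)]
    have h2 : |f' x - x * f x| ≤ C' + |x| * C := by
      calc |f' x - x * f x| ≤ |f' x| + |x * f x| := abs_sub _ _
        _ ≤ C' + |x| * C := by
            rw [abs_mul]
            exact add_le_add (hderiv_bdd x)
              (mul_le_mul_of_nonneg_left (hbdd x) (abs_nonneg x))
    calc ‖G' x‖ = |f' x - x * f x| * φ x := h1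
      _ ≤ (C' + |x| * C) * φ x := by
          exact mul_le_mul_of_nonneg_right h2 (hφpos x).le
      _ = C' * φ x + C * (|x| * φ x) := by ring
  -- g tends to 0 at ±∞
  have hφ_tendsto_top : Tendsto φ atTop (𝓝 0) := by
    have h1 : Tendsto (fun x : ℝ => -(x ^ 2) / 2) atTop atBot := by
      apply Filter.Tendsto.atBot_div_const (by norm_num)
      exact tendsto_neg_atBot_iff.mpr (tendsto_pow_atTop (n := 2) two_ne_zero)
    have h2 : Tendsto (fun x : ℝ => Real.exp (-(x ^ 2) / 2)) atTop (𝓝 0) :=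
      Real.tendsto_exp_atBot.comp h1
    have := h2.const_mul (Real.sqrt (2 * π))⁻¹
    simpa [funext hφ_eq, mul_zero] using this
  have hφ_tendsto_bot : Tendsto φ atBot (𝓝 0) := by
    have h1 : Tendsto (fun x : ℝ => -(x ^ 2) / 2) atBot atBot := by
      apply Filter.Tendsto.atBot_div_const (by norm_num)
      rw [tendsto_neg_atBot_iff]
      have h3 : Tendsto (fun x : ℝ => x ^ 2) atBot atTop := by
        have h4 := (tendsto_pow_atTop (n := 2) two_ne_zero).comp (tendsto_abs_atBot_atTop : Tendsto (abs : ℝ → ℝ) atBot atTop)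
        refine h4.congr fun x => ?_
        simp [sq_abs]
      exact h3
    have h2 : Tendsto (fun x : ℝ => Real.exp (-(x ^ 2) / 2)) atBot (𝓝 0) :=
      Real.tendsto_exp_atBot.comp h1
    have := h2.const_mul (Real.sqrt (2 * π))⁻¹
    simpa [funext hφ_eq, mul_zero] using this
  have hg_bound : ∀ x, ‖g x‖ ≤ C * φ x := by
    intro x
    rw [hgdef]
    simp only [norm_mul, Real.norm_eq_abs, abs_of_pos (hφpos x)]
    exact mul_le_mul_of_nonneg_right (hbdd x) (hφpos x).le
  have hg_top : Tendsto g atTop (𝓝 0) := by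
    refine squeeze_zero_norm hg_bound ?_
    simpa using hφ_tendsto_top.const_mul C
  have hg_bot : Tendsto g atBot (𝓝 0) := by
    refine squeeze_zero_norm hg_bound ?_
    simpa using hφ_tendsto_bot.const_mul C
  -- Choose M bounding all points of s
  set M : ℝ := 1 + ∑ c ∈ s, |c| with hMdef
  have hM : ∀ c ∈ s, |c| < M := by
    intro c hc
    have : |c| ≤ ∑ c ∈ s, |c| := Finset.single_le_sum (fun i _ => abs_nonneg i) hc
    linarith
  have hMpos : 0 < M := by
    have : 0 ≤ ∑ c ∈ s, |c| := Finset.sum_nonneg fun i _ => abs_nonneg i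
    linarith
  have hMM : -M ≤ M := by linarith
  -- tail integrals
  have htop : ∫ x in Set.Ioi M, G' x = 0 - g M := by
    refine MeasureTheory.integral_Ioi_of_hasDerivAt_of_tendsto
      hgcont.continuousWithinAt ?_ hG'int.integrableOn hg_top
    intro x hx
    refine hgderiv x fun hxs => ?_
    have := hM x hxs
    have : x ≤ |x| := le_abs_self x
    simp only [Set.mem_Ioi] at hx
    linarith [hM x hxs]
  have hbot : ∫ x in Set.Iic (-M), G' x = g (-M) - 0 := by
    refine MeasureTheory.integral_Iic_of_hasDerivAt_of_tendsto
      hgcont.continuousWithinAt ?_ hG'int.integrableOn hg_bot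
    intro x hx
    refine hgderiv x fun hxs => ?_
    have h1 : -x ≤ |x| := neg_le_abs x
    simp only [Set.mem_Iio] at hx
    linarith [hM x hxs]
  have hmid : ∫ y in (-M)..M, G' y = g M - g (-M) := by
    refine ftc_finset_aux s g G' (-M) M hMM hgcont.continuousOn ?_
      (hG'int.intervalIntegrable)
    intro x _ hxs
    exact hgderiv x hxs
  -- combine: total integral of G' is 0
  have htotal : ∫ x, G' x = 0 := by
    have hIicM : ∫ x in Set.Iic M, G' x = g M - 0 := by
      have := intervalIntegral.integral_Iic_sub_Iic (f := G') (μ := volume)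
        (a := -M) (b := M) hG'int.integrableOn hG'int.integrableOn
      rw [hmid, hbot] at this
      linarith
    rw [← intervalIntegral.integral_Iic_add_Ioi (b := M) hG'int.integrableOn hG'int.integrableOn,
      hIicM, htop]
    ring
  -- now transfer to the Gaussian measure
  have hγ : gaussianReal 0 1 = volume.withDensity (fun x => ((φ x).toNNReal : ℝ≥0∞)) := by
    rw [gaussianReal_of_var_ne_zero 0 one_ne_zero]
    rfl
  have hφmeas' : Measurable fun x => (φ x).toNNReal := hφmeas.real_toNNReal
  have hint_eq : ∀ h : ℝ → ℝ, ∫ z, h z ∂(gaussianReal 0 1) = ∫ z, φ z * h z := by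
    intro h
    rw [hγ, integral_withDensity_eq_integral_smul hφmeas' h]
    refine integral_congr_ae (Filter.Eventually.of_forall fun x => ?_)
    simp [NNReal.smul_def, Real.coe_toNNReal _ (hφpos x).le]
  rw [hint_eq, hint_eq]
  -- integrability of the two pieces
  have hint1 : Integrable (fun z => φ z * (z * f z)) volume := by
    refine Integrable.mono' (habsint.const_mul C)
      (Measurable.aestronglyMeasurable (hφmeas.mul (measurable_id.mul hcont.measurable)))
      (Filter.Eventually.of_forall fun x => ?_)
    rw [Real.norm_eq_abs, abs_mul, abs_of_pos (hφpos x), abs_mul]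
    calc φ x * (|x| * |f x|) ≤ φ x * (|x| * C) :=
          mul_le_mul_of_nonneg_left
            (mul_le_mul_of_nonneg_left (hbdd x) (abs_nonneg x)) (hφpos x).le
      _ = C * (|x| * φ x) := by ring
  have hint2 : Integrable (fun z => φ z * f' z) volume := by
    refine Integrable.mono' (hφint.const_mul C')
      (Measurable.aestronglyMeasurable (hφmeas.mul hmeas))
      (Filter.Eventually.of_forall fun x => ?_)
    rw [Real.norm_eq_abs, abs_mul, abs_of_pos (hφpos x)]
    calc φ x * |f' x| ≤ φ x * C' :=
          mul_le_mul_of_nonneg_left (hderiv_bdd x) (hφpos x).le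
      _ = C' * φ x := by ring
  have hsub : ∫ z, (φ z * (z * f z) - φ z * f' z) = ∫ x, (- G' x) := by
    refine integral_congr_ae (Filter.Eventually.of_forall fun x => ?_)
    simp only [hG'def]; ring
  have := MeasureTheory.integral_sub hint1 hint2
  rw [hsub] at this
  rw [integral_neg, htotal, neg_zero] at this
  linarith
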